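/- arXiv:0810.4218 — 3 statements merged into one kernel-verified Lean document; each statement's English description precedes it below -/
import Mathlib

section
/- Let (Z_t)_{t∈ℕ} be an integrable adapted process and suppose there is a constant c₁ ∈ (0,∞) such that ΔZ_t − P[ΔZ_t | F_{t−1}] ≥ −c₁ a.s. for all t ≥ 1. Then, up to P-null sets, { lim_{t→∞} Z_t = ∞ } = { lim_{t→∞} Z_t = ∞ and limsup_{t→∞} A_t/Z_t ≥ 1 } ⊂ { sup_{t≥1} A_t = ∞ }. -/
open MeasureTheory ProbabilityTheory Filter Topology
open scoped ENNReal NNReal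

namespace GenBC

variable {Ω : Type*} {m0 : MeasurableSpace Ω}

/-- The compensator `A_t = Σ_{s=1}^t P[ΔZ_s | F_{s-1}]` of an adapted process `Z`. -/
noncomputable def comp (P : Measure Ω) (F : Filtration ℕ m0) (Z : ℕ → Ω → ℝ)
    (t : ℕ) (ω : Ω) : ℝ :=
  ∑ s ∈ Finset.range t, (P[fun ω => Z (s + 1) ω - Z s ω | F s]) ω

section OneSided

variable {μ : Measure Ω} {ℱ : Filtration ℕ m0} {f : ℕ → Ω → ℝ} {r : ℝ} {R : ℝ≥0}

theorem oneSided_norm_stoppedValue_leastGE_le (hr : 0 ≤ r) (hf0 : f 0 = 0)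
    (hbdd : ∀ᵐ ω ∂μ, ∀ i, f (i + 1) ω - f i ω ≤ R) (i : ℕ) :
    ∀ᵐ ω ∂μ, stoppedAbove f r i ω ≤ r + R := by
  filter_upwards [hbdd] with ω hbddω
  rw [stoppedAbove, stoppedProcess, ENat.some_eq_natCast]
  show f (min (i : ℕ∞) (leastGE f r ω)).untopA ω ≤ r + R
  by_cases h_zero : (min (i : ℕ∞) (leastGE f r ω)).untopA = 0
  · simp only [h_zero, hf0, Pi.zero_apply]
    positivity
  obtain ⟨k, hk⟩ := Nat.exists_eq_add_one_of_ne_zero h_zero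
  rw [hk, add_comm r, ← sub_le_iff_le_add]
  have := notMem_of_lt_hittingAfter (?_ : k < leastGE f r ω)
  · simp only [bot_eq_zero, zero_le, Set.mem_Ici, not_le, forall_const] at this
    exact (sub_lt_sub_left this _).le.trans (hbddω _)
  · suffices (k : ℕ∞) < min (i : ℕ∞) (leastGE f r ω) from this.trans_le (min_le_right _ _)
    have h_top : min (i : ℕ∞) (leastGE f r ω) ≠ ⊤ :=
      ne_top_of_le_ne_top (by simp) (min_le_left _ _)
    lift min (i : ℕ∞) (leastGE f r ω) to ℕ using h_top with p
    simp only [untopD_coe_enat, Nat.cast_lt, gt_iff_lt] at *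
    lia

theorem oneSided_stoppedValue_leastGE_eLpNorm_le [IsFiniteMeasure μ] (hf : Submartingale f ℱ μ)
    (hr : 0 ≤ r) (hf0 : f 0 = 0) (hbdd : ∀ᵐ ω ∂μ, ∀ i, f (i + 1) ω - f i ω ≤ R) (i : ℕ) :
    eLpNorm (stoppedAbove f r i) 1 μ ≤ 2 * μ Set.univ * ENNReal.ofReal (r + R) := by
  refine eLpNorm_one_le_of_le' ((hf.stoppedAbove r).integrable _) ?_
    (oneSided_norm_stoppedValue_leastGE_le hr hf0 hbdd i)
  rw [← setIntegral_univ]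
  refine le_trans ?_ ((hf.stoppedAbove r).setIntegral_le zero_le MeasurableSet.univ)
  simp [stoppedAbove, stoppedProcess, hf0]

theorem oneSided_stoppedValue_leastGE_eLpNorm_le' [IsFiniteMeasure μ]
    (hf : Submartingale f ℱ μ) (hr : 0 ≤ r) (hf0 : f 0 = 0)
    (hbdd : ∀ᵐ ω ∂μ, ∀ i, f (i + 1) ω - f i ω ≤ R) (i : ℕ) :
    eLpNorm (stoppedAbove f r i) 1 μ ≤
      ENNReal.toNNReal (2 * μ Set.univ * ENNReal.ofReal (r + R)) := by
  refine (oneSided_stoppedValue_leastGE_eLpNorm_le hf hr hf0 hbdd i).trans ?_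
  simp [ENNReal.coe_toNNReal (measure_ne_top μ _), ENNReal.coe_toNNReal]

theorem oneSided_exists_tendsto_of_bddAbove_aux [IsFiniteMeasure μ]
    (hf : Submartingale f ℱ μ) (hf0 : f 0 = 0)
    (hbdd : ∀ᵐ ω ∂μ, ∀ i, f (i + 1) ω - f i ω ≤ R) :
    ∀ᵐ ω ∂μ, BddAbove (Set.range fun n => f n ω) → ∃ c, Tendsto (fun n => f n ω) atTop (𝓝 c) := by
  have ht :
    ∀ᵐ ω ∂μ, ∀ i : ℕ, ∃ c, Tendsto (fun n => stoppedAbove f i n ω) atTop (𝓝 c) := by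
    rw [ae_all_iff]
    exact fun i => Submartingale.exists_ae_tendsto_of_bdd (hf.stoppedAbove i)
      (oneSided_stoppedValue_leastGE_eLpNorm_le' hf i.cast_nonneg hf0 hbdd)
  filter_upwards [ht] with ω hω hωb
  rw [BddAbove] at hωb
  obtain ⟨i, hi⟩ := exists_nat_gt hωb.some
  have hib : ∀ n, f n ω < i := by
    intro n
    exact lt_of_le_of_lt ((mem_upperBounds.1 hωb.some_mem) _ ⟨n, rfl⟩) hi
  have heq : ∀ n, stoppedAbove f i n ω = f n ω := by
    intro n
    rw [stoppedAbove, stoppedProcess, leastGE, hittingAfter_eq_top_iff.mpr]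
    · simp only [le_top, inf_of_le_left]
      congr
    · simp [hib]
  simp only [← heq, hω i]

theorem oneSided_bddAbove_imp_tendsto [IsFiniteMeasure μ] (hf : Submartingale f ℱ μ)
    (hbdd : ∀ᵐ ω ∂μ, ∀ i, f (i + 1) ω - f i ω ≤ R) :
    ∀ᵐ ω ∂μ, BddAbove (Set.range fun n => f n ω) → ∃ c, Tendsto (fun n => f n ω) atTop (𝓝 c) := by
  set g : ℕ → Ω → ℝ := fun n ω => f n ω - f 0 ω
  have hg : Submartingale g ℱ μ :=
    hf.sub_martingale (martingale_const_fun _ _ (hf.stronglyAdapted 0) (hf.integrable 0))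
  have hg0 : g 0 = 0 := by
    ext ω
    simp only [g, sub_self, Pi.zero_apply]
  have hgbdd : ∀ᵐ ω ∂μ, ∀ i : ℕ, g (i + 1) ω - g i ω ≤ ↑R := by
    simpa only [g, sub_sub_sub_cancel_right]
  filter_upwards [oneSided_exists_tendsto_of_bddAbove_aux hg hg0 hgbdd] with ω hω hb
  have hbg : BddAbove (Set.range fun n => g n ω) := by
    obtain ⟨b, hbb⟩ := hb
    refine ⟨b + |f 0 ω|, fun y hy => ?_⟩
    obtain ⟨n, rfl⟩ := hy
    simp_rw [g, sub_eq_add_neg]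
    exact add_le_add (hbb ⟨n, rfl⟩) (neg_le_abs _)
  obtain ⟨c, hc⟩ := hω hbg
  refine ⟨c + f 0 ω, ?_⟩
  have := hc.add_const (f 0 ω)
  simpa only [g, sub_add_cancel] using this

end OneSided

/-- **Lemma 2.3 a)** (generalized Borel–Cantelli): if `Z` is integrable and adapted with
`ΔZ_t - P[ΔZ_t|F_{t-1}] ≥ -c₁` a.s., then a.s. on `{lim_t Z_t = ∞}` one has both
`limsup_t A_t/Z_t ≥ 1` (rendered: for every `ε > 0`, frequently `A_t/Z_t > 1 - ε`) and
`sup_t A_t = ∞`. -/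
theorem generalized_borel_cantelli_a
    (P : Measure Ω) [IsProbabilityMeasure P] (F : Filtration ℕ m0)
    (Z : ℕ → Ω → ℝ)
    (hadapt : Adapted F Z)
    (hint : ∀ t, Integrable (Z t) P)
    (c₁ : ℝ) (hc₁ : 0 < c₁)
    (hlb : ∀ t : ℕ, ∀ᵐ ω ∂P,
      -c₁ ≤ (Z (t + 1) ω - Z t ω) - (P[fun ω => Z (t + 1) ω - Z t ω | F t]) ω) :
    ∀ᵐ ω ∂P, Tendsto (fun t => Z t ω) atTop atTop →
      ((∀ ε : ℝ, 0 < ε → ∃ᶠ t in atTop, 1 - ε < comp P F Z t ω / Z t ω) ∧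
        ¬ BddAbove (Set.range fun t => comp P F Z t ω)) := by
  set M : ℕ → Ω → ℝ := martingalePart Z F P with hMdef
  have hcomp : ∀ n ω, comp P F Z n ω = predictablePart Z F P n ω := by
    intro n ω
    unfold comp predictablePart
    rw [Finset.sum_apply]
    rfl
  have hMA : ∀ n ω, M n ω = Z n ω - comp P F Z n ω := by
    intro n ω
    rw [hcomp]
    rfl
  have hM : Martingale M F P := martingale_martingalePart hadapt.stronglyAdapted hint
  have hMince : ∀ n ω, M (n + 1) ω - M n ω
      = (Z (n + 1) ω - Z n ω) - (P[fun ω => Z (n + 1) ω - Z n ω | F n]) ω := by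
    intro n ω
    simp only [hMA, comp, Finset.sum_range_succ]
    ring
  have hNbdd : ∀ᵐ ω ∂P, ∀ i, (-M) (i + 1) ω - (-M) i ω ≤ ((⟨c₁, hc₁.le⟩ : ℝ≥0) : ℝ) := by
    rw [ae_all_iff]
    intro i
    filter_upwards [hlb i] with ω hω
    simp only [Pi.neg_apply, NNReal.coe_mk]
    have := hMince i ω
    linarith
  have hconv := oneSided_bddAbove_imp_tendsto hM.neg.submartingale hNbdd
  filter_upwards [hconv] with ω hω hZ
  have key : ¬ BddAbove (Set.range fun n => -M n ω) →
      ∀ N : ℕ, ∃ n, N ≤ n ∧ M n ω < 0 := by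
    intro hnb N
    rw [not_bddAbove_iff] at hnb
    obtain ⟨y, ⟨n, rfl⟩, hy⟩ := hnb
      (max 0 ((Finset.range (N + 1)).sup' ⟨0, by simp⟩ fun k => -M k ω))
    refine ⟨n, ?_, ?_⟩
    · by_contra hn
      push_neg at hn
      have : -M n ω ≤ (Finset.range (N + 1)).sup' ⟨0, by simp⟩ fun k => -M k ω :=
        Finset.le_sup' (fun k => -M k ω) (Finset.mem_range.2 (Nat.lt_succ_of_le hn.le))
      exact absurd (this.trans (le_max_right _ _)) (not_le.2 hy)
    · have : (0 : ℝ) < -M n ω := lt_of_le_of_lt (le_max_left _ _) hy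
      linarith
  by_cases hb : BddAbove (Set.range fun n => -M n ω)
  · -- M converges, so comp → ∞ and comp/Z → 1
    obtain ⟨c, hc⟩ := hω (by simpa using hb)
    have hMc : Tendsto (fun n => M n ω) atTop (𝓝 (-c)) := by
      have := hc.neg
      simpa using this
    have hA : Tendsto (fun n => comp P F Z n ω) atTop atTop := by
      refine tendsto_atTop_mono' atTop ?_ (tendsto_atTop_add_const_right _ (c - 1) hZ)
      filter_upwards [hc.eventually (eventually_ge_nhds (by linarith : c - 1 < c))] with n hn
      have := hMA n ω
      simp only [Pi.neg_apply] at hn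
      linarith
    have hratio : Tendsto (fun n => comp P F Z n ω / Z n ω) atTop (𝓝 1) := by
      have hMZ : Tendsto (fun n => M n ω / Z n ω) atTop (𝓝 0) :=
        Tendsto.div_atTop hMc hZ
      have h1 : Tendsto (fun n => 1 - M n ω / Z n ω) atTop (𝓝 1) := by
        simpa using (tendsto_const_nhds (x := (1 : ℝ)) (f := atTop)).sub hMZ
      refine h1.congr' ?_
      filter_upwards [hZ.eventually_gt_atTop 0] with n hn
      rw [hMA]
      field_simp
      ring
    constructor
    · intro ε hε
      have : ∀ᶠ n in atTop, 1 - ε < comp P F Z n ω / Z n ω := by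
        have := hratio.eventually_const_lt (show 1 - ε < 1 by linarith)
        exact this
      exact this.frequently
    · exact not_bddAbove_of_tendsto_atTop hA
  · constructor
    · intro ε hε
      rw [frequently_atTop]
      intro N
      obtain ⟨N₀, hN₀⟩ := (hZ.eventually_gt_atTop 0).exists_forall_of_atTop
      obtain ⟨n, hn, hMn⟩ := key hb (max N N₀)
      refine ⟨n, le_trans (le_max_left _ _) hn, ?_⟩
      have hZn : 0 < Z n ω := hN₀ n (le_trans (le_max_right _ _) hn)
      have hAn : Z n ω < comp P F Z n ω := by
        have := hMA n ω; linarith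
      have : comp P F Z n ω / Z n ω > 1 := by
        rw [gt_iff_lt, lt_div_iff₀ hZn]; linarith
      linarith
    · rintro ⟨b, hbnd⟩
      obtain ⟨N₀, hN₀⟩ := (hZ.eventually_gt_atTop b).exists_forall_of_atTop
      obtain ⟨n, hn, hMn⟩ := key hb N₀
      have hAn : b < comp P F Z n ω := by
        have h1 := hMA n ω
        have h2 := hN₀ n hn
        linarith
      exact absurd (hbnd ⟨n, rfl⟩) (not_le.2 hAn)

end GenBC
end

section
/- Let U_1,...,U_n (n ≥ 2) be independent nonnegative random variables with P[U_i³] < ∞ for all i and Σ_{i=1}^n m_i = 1, where m_i = P[U_i], and set U = Σ_{i=1}^n U_i. Then: (i) P[ U_1U_2/U² : U > 0 ] ≥ m_1 m_2 − 2 m_2 var(U_1) − 2 m_1 var(U_2); and (ii) P[ U_1²/U² : U > 0 ] ≥ P[U_1²](1 + 2m_1) − 2 P[U_1³]. -/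
open MeasureTheory ProbabilityTheory

set_option linter.unusedSectionVars false

private lemma amgm3 {a b c : ℝ} (ha : 0 ≤ a) (hb : 0 ≤ b) (hc : 0 ≤ c) :
    a * b * c ≤ a ^ 3 + b ^ 3 + c ^ 3 := by
  nlinarith [sq_nonneg (a - b), sq_nonneg (b - c), sq_nonneg (a - c),
    mul_nonneg ha hb, mul_nonneg hb hc, mul_nonneg ha hc,
    mul_nonneg (mul_nonneg ha hb) hc, sq_nonneg (a + b + c),
    mul_nonneg ha (sq_nonneg (b - c)), mul_nonneg hb (sq_nonneg (a - c)),
    mul_nonneg hc (sq_nonneg (a - b))]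

private lemma indicator_ratio_ge {Ω : Type*} [MeasurableSpace Ω] (P : Measure Ω)
    [IsProbabilityMeasure P] (f S : Ω → ℝ) (hfm : Measurable f) (hSm : Measurable S)
    (hf0 : ∀ ω, 0 ≤ f ω) (hS0 : ∀ ω, 0 ≤ S ω) (hfS : ∀ ω, f ω ≤ S ω ^ 2)
    (hint : Integrable (fun ω => f ω * (3 - 2 * S ω)) P) :
    ∫ ω, f ω * (3 - 2 * S ω) ∂P ≤
      ∫ ω, Set.indicator {ω | 0 < S ω} (fun ω => f ω / S ω ^ 2) ω ∂P := by
  have hA : MeasurableSet {ω | 0 < S ω} := measurableSet_lt measurable_const hSm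
  have hgm : Measurable (Set.indicator {ω | 0 < S ω} (fun ω => f ω / S ω ^ 2)) :=
    (hfm.div (hSm.pow_const 2)).indicator hA
  have hb : ∀ ω, ‖Set.indicator {ω | 0 < S ω} (fun ω => f ω / S ω ^ 2) ω‖ ≤ 1 := by
    intro ω
    by_cases hω : ω ∈ {ω | 0 < S ω}
    · rw [Set.indicator_of_mem hω]
      have hS : (0:ℝ) < S ω := hω
      have h2 : (0:ℝ) < S ω ^ 2 := by positivity
      rw [Real.norm_of_nonneg (div_nonneg (hf0 ω) h2.le)]
      exact (div_le_one h2).2 (hfS ω)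
    · rw [Set.indicator_of_notMem hω]; simp
  have hgint : Integrable (Set.indicator {ω | 0 < S ω} (fun ω => f ω / S ω ^ 2)) P :=
    (integrable_const (1:ℝ)).mono' hgm.aestronglyMeasurable (Filter.Eventually.of_forall hb)
  refine integral_mono hint hgint fun ω => ?_
  by_cases hω : ω ∈ {ω | 0 < S ω}
  · rw [Set.indicator_of_mem hω]
    have hS : (0:ℝ) < S ω := hω
    have h1 : 3 - 2 * S ω ≤ 1 / S ω ^ 2 := by
      rw [le_div_iff₀ (by positivity)]
      nlinarith [sq_nonneg (S ω - 1)]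
    calc f ω * (3 - 2 * S ω) ≤ f ω * (1 / S ω ^ 2) :=
          mul_le_mul_of_nonneg_left h1 (hf0 ω)
      _ = f ω / S ω ^ 2 := by ring
  · rw [Set.indicator_of_notMem hω]
    have hS : S ω = 0 := le_antisymm (not_lt.1 hω) (hS0 ω)
    have hfz : f ω = 0 := le_antisymm (by nlinarith [hfS ω]) (hf0 ω)
    simp [hfz]

/-- **Lemma 3.1 (CH)**: let `U_1, ..., U_n` (`n ≥ 2`) be independent nonnegative random
variables with finite third moments and `Σ_i m_i = 1` where `m_i = P[U_i]`, and let
`U = Σ_i U_i`. Then, for distinct indices `i, j`: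
(i) `P[U_iU_j/U² : U > 0] ≥ m_i m_j - 2 m_j var(U_i) - 2 m_i var(U_j)`; and
(ii) `P[U_i²/U² : U > 0] ≥ P[U_i²](1 + 2 m_i) - 2 P[U_i³]`. -/
theorem ratio_moment_lower_bounds
    {Ω : Type*} [MeasurableSpace Ω] (P : Measure Ω) [IsProbabilityMeasure P]
    (n : ℕ) (hn : 2 ≤ n) (U : Fin n → Ω → ℝ)
    (hmeas : ∀ i, Measurable (U i))
    (hnonneg : ∀ i ω, 0 ≤ U i ω)
    (hindep : iIndepFun U P)
    (hmom : ∀ i, Integrable (fun ω => U i ω ^ 3) P)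
    (hsum : ∑ i, ∫ ω, U i ω ∂P = 1)
    (i j : Fin n) (hij : i ≠ j) :
    ((∫ ω, Set.indicator {ω | 0 < ∑ k, U k ω}
        (fun ω => U i ω * U j ω / (∑ k, U k ω) ^ 2) ω ∂P) ≥
      (∫ ω, U i ω ∂P) * (∫ ω, U j ω ∂P)
        - 2 * (∫ ω, U j ω ∂P) * ((∫ ω, U i ω ^ 2 ∂P) - (∫ ω, U i ω ∂P) ^ 2)
        - 2 * (∫ ω, U i ω ∂P) * ((∫ ω, U j ω ^ 2 ∂P) - (∫ ω, U j ω ∂P) ^ 2)) ∧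
    ((∫ ω, Set.indicator {ω | 0 < ∑ k, U k ω}
        (fun ω => U i ω ^ 2 / (∑ k, U k ω) ^ 2) ω ∂P) ≥
      (∫ ω, U i ω ^ 2 ∂P) * (1 + 2 * ∫ ω, U i ω ∂P) - 2 * ∫ ω, U i ω ^ 3 ∂P) := by
  -- basic facts
  have hS_meas : Measurable (fun ω => ∑ k, U k ω) := by
    exact Finset.measurable_sum _ fun k _ => hmeas k
  have hS0 : ∀ ω, 0 ≤ ∑ k, U k ω := fun ω => Finset.sum_nonneg fun k _ => hnonneg k ω
  have hle : ∀ k ω, U k ω ≤ ∑ l, U l ω := fun k ω =>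
    Finset.single_le_sum (fun l _ => hnonneg l ω) (Finset.mem_univ k)
  -- integrability
  have h1 : ∀ k, Integrable (U k) P := by
    intro k
    refine ((integrable_const (1:ℝ)).add (hmom k)).mono'
      (hmeas k).aestronglyMeasurable (Filter.Eventually.of_forall fun ω => ?_)
    rw [Real.norm_of_nonneg (hnonneg k ω)]
    have hx := hnonneg k ω
    show U k ω ≤ 1 + U k ω ^ 3
    nlinarith [sq_nonneg (U k ω - 1), mul_nonneg hx (sq_nonneg (U k ω - 1))]
  have h2 : ∀ k, Integrable (fun ω => U k ω ^ 2) P := by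
    intro k
    refine ((integrable_const (1:ℝ)).add (hmom k)).mono'
      ((hmeas k).pow_const 2).aestronglyMeasurable (Filter.Eventually.of_forall fun ω => ?_)
    rw [Real.norm_of_nonneg (by positivity)]
    have hx := hnonneg k ω
    show U k ω ^ 2 ≤ 1 + U k ω ^ 3
    nlinarith [sq_nonneg (U k ω - 1), mul_nonneg hx (sq_nonneg (U k ω - 1))]
  have hp3 : ∀ a b c, Integrable (fun ω => U a ω * U b ω * U c ω) P := by
    intro a b c
    refine ((hmom a).add ((hmom b).add (hmom c))).mono'
      (((hmeas a).mul (hmeas b)).mul (hmeas c)).aestronglyMeasurable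
      (Filter.Eventually.of_forall fun ω => ?_)
    rw [Real.norm_of_nonneg
      (mul_nonneg (mul_nonneg (hnonneg a ω) (hnonneg b ω)) (hnonneg c ω))]
    have := amgm3 (hnonneg a ω) (hnonneg b ω) (hnonneg c ω)
    show U a ω * U b ω * U c ω ≤ U a ω ^ 3 + (U b ω ^ 3 + U c ω ^ 3)
    linarith
  have hp2 : ∀ a b, Integrable (fun ω => U a ω * U b ω) P := by
    intro a b
    refine ((integrable_const (1:ℝ)).add ((hmom a).add (hmom b))).mono'
      ((hmeas a).mul (hmeas b)).aestronglyMeasurable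
      (Filter.Eventually.of_forall fun ω => ?_)
    rw [Real.norm_of_nonneg (mul_nonneg (hnonneg a ω) (hnonneg b ω))]
    have := amgm3 (hnonneg a ω) (hnonneg b ω) (zero_le_one (α := ℝ))
    show U a ω * U b ω ≤ 1 + (U a ω ^ 3 + U b ω ^ 3)
    nlinarith
  -- product expectation formulas
  have E2 : ∀ a b, a ≠ b →
      ∫ ω, U a ω * U b ω ∂P = (∫ ω, U a ω ∂P) * (∫ ω, U b ω ∂P) := fun a b hab =>
    (hindep.indepFun hab).integral_mul_eq_mul_integral (h1 a).aestronglyMeasurable (h1 b).aestronglyMeasurable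
  have E21 : ∀ a b, a ≠ b →
      ∫ ω, U a ω ^ 2 * U b ω ∂P = (∫ ω, U a ω ^ 2 ∂P) * (∫ ω, U b ω ∂P) := fun a b hab =>
    ((hindep.indepFun hab).comp (measurable_id.pow_const 2)
      measurable_id).integral_mul_eq_mul_integral (h2 a).aestronglyMeasurable (h1 b).aestronglyMeasurable
  have E3 : ∀ a b c, a ≠ c → b ≠ c → a ≠ b →
      ∫ ω, U a ω * U b ω * U c ω ∂P
        = (∫ ω, U a ω ∂P) * (∫ ω, U b ω ∂P) * (∫ ω, U c ω ∂P) := by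
    intro a b c hac hbc hab
    have h := (hindep.indepFun_mul_left hmeas a b c hac hbc).integral_mul_eq_mul_integral
      (hp2 a b).aestronglyMeasurable (h1 c).aestronglyMeasurable
    rw [show (integral P (U a * U b * U c)) = ∫ ω, U a ω * U b ω * U c ω ∂P from rfl] at h
    rw [h, (hindep.indepFun hab).integral_mul_eq_mul_integral (h1 a).aestronglyMeasurable (h1 b).aestronglyMeasurable]
  -- generic expansion of ∫ f·(3 − 2S)
  have key : ∀ (f : Ω → ℝ), Integrable f P →
      (∀ k, Integrable (fun ω => f ω * U k ω) P) →
      Integrable (fun ω => f ω * (3 - 2 * ∑ k, U k ω)) P ∧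
      ∫ ω, f ω * (3 - 2 * ∑ k, U k ω) ∂P
        = 3 * ∫ ω, f ω ∂P - 2 * ∑ k, ∫ ω, f ω * U k ω ∂P := by
    intro f hf hfk
    have hfS : Integrable (fun ω => ∑ k, f ω * U k ω) P :=
      integrable_finset_sum _ fun k _ => hfk k
    have heq : (fun ω => f ω * (3 - 2 * ∑ k, U k ω)) =
        fun ω => 3 * f ω - 2 * ∑ k, f ω * U k ω := by
      funext ω; rw [← Finset.mul_sum]; ring
    constructor
    · rw [heq]; exact (hf.const_mul 3).sub (hfS.const_mul 2)
    · rw [heq, integral_sub (hf.const_mul 3) (hfS.const_mul 2),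
        integral_const_mul, integral_const_mul,
        integral_finset_sum _ fun k _ => hfk k]
  -- sum splitting
  have hsplit2 : ∀ (F : Fin n → ℝ),
      ∑ k, F k = F i + F j + ∑ k ∈ (Finset.univ.erase i).erase j, F k := by
    intro F
    rw [← Finset.add_sum_erase _ F (Finset.mem_univ i),
      ← Finset.add_sum_erase _ F (Finset.mem_erase.2 ⟨hij.symm, Finset.mem_univ j⟩)]
    ring
  have hsplit1 : ∀ (F : Fin n → ℝ),
      ∑ k, F k = F i + ∑ k ∈ Finset.univ.erase i, F k := fun F =>
    (Finset.add_sum_erase _ F (Finset.mem_univ i)).symm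
  have hrest2 : ∑ k ∈ (Finset.univ.erase i).erase j, ∫ ω, U k ω ∂P
      = 1 - (∫ ω, U i ω ∂P) - (∫ ω, U j ω ∂P) := by
    have h := hsplit2 (fun k => ∫ ω, U k ω ∂P)
    rw [hsum] at h
    linarith
  have hrest1 : ∑ k ∈ Finset.univ.erase i, ∫ ω, U k ω ∂P
      = 1 - (∫ ω, U i ω ∂P) := by
    have h := hsplit1 (fun k => ∫ ω, U k ω ∂P)
    rw [hsum] at h
    linarith
  constructor
  · -- part (i)
    set f : Ω → ℝ := fun ω => U i ω * U j ω with hf_def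
    have hfm : Measurable f := (hmeas i).mul (hmeas j)
    have hf0 : ∀ ω, 0 ≤ f ω := fun ω => mul_nonneg (hnonneg i ω) (hnonneg j ω)
    have hfS : ∀ ω, f ω ≤ (∑ k, U k ω) ^ 2 := by
      intro ω
      have := mul_le_mul (hle i ω) (hle j ω) (hnonneg j ω) (hS0 ω)
      calc f ω ≤ (∑ k, U k ω) * (∑ k, U k ω) := this
        _ = (∑ k, U k ω) ^ 2 := (sq _).symm
    have hfk : ∀ k, Integrable (fun ω => f ω * U k ω) P := fun k => hp3 i j k
    have hfint : Integrable f P := hp2 i j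
    obtain ⟨hint, hval⟩ := key f hfint hfk
    have hmain := indicator_ratio_ge P f (fun ω => ∑ k, U k ω) hfm hS_meas hf0 hS0 hfS hint
    refine le_trans ?_ hmain
    rw [hval]
    -- compute the sum
    have hsum_split := hsplit2 (fun k => ∫ ω, f ω * U k ω ∂P)
    have hFi : ∫ ω, f ω * U i ω ∂P = (∫ ω, U i ω ^ 2 ∂P) * (∫ ω, U j ω ∂P) := by
      rw [show (fun ω => f ω * U i ω) = fun ω => U i ω ^ 2 * U j ω from
        funext fun ω => by simp only [hf_def]; try ring]
      exact E21 i j hij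
    have hFj : ∫ ω, f ω * U j ω ∂P = (∫ ω, U j ω ^ 2 ∂P) * (∫ ω, U i ω ∂P) := by
      rw [show (fun ω => f ω * U j ω) = fun ω => U j ω ^ 2 * U i ω from
        funext fun ω => by simp only [hf_def]; try ring]
      exact E21 j i hij.symm
    have hFrest : ∑ k ∈ (Finset.univ.erase i).erase j, ∫ ω, f ω * U k ω ∂P
        = (∫ ω, U i ω ∂P) * (∫ ω, U j ω ∂P)
          * (1 - (∫ ω, U i ω ∂P) - (∫ ω, U j ω ∂P)) := by
      rw [Finset.sum_congr rfl (fun k hk => ?_), ← Finset.mul_sum, hrest2]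
      have hkj : k ≠ j := (Finset.mem_erase.1 hk).1
      have hki : k ≠ i := (Finset.mem_erase.1 (Finset.mem_erase.1 hk).2).1
      show ∫ ω, f ω * U k ω ∂P = (∫ ω, U i ω ∂P) * (∫ ω, U j ω ∂P) * (∫ ω, U k ω ∂P)
      exact E3 i j k hki.symm hkj.symm hij
    rw [hsum_split, hFi, hFj, hFrest, E2 i j hij]
    ring_nf
    linarith
  · -- part (ii)
    set f : Ω → ℝ := fun ω => U i ω ^ 2 with hf_def
    have hfm : Measurable f := (hmeas i).pow_const 2
    have hf0 : ∀ ω, 0 ≤ f ω := fun ω => sq_nonneg _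
    have hfS : ∀ ω, f ω ≤ (∑ k, U k ω) ^ 2 := fun ω =>
      pow_le_pow_left₀ (hnonneg i ω) (hle i ω) 2
    have hfk : ∀ k, Integrable (fun ω => f ω * U k ω) P := by
      intro k
      rw [show (fun ω => f ω * U k ω) = fun ω => U i ω * U i ω * U k ω from
        funext fun ω => by simp only [hf_def]; try ring]
      exact hp3 i i k
    obtain ⟨hint, hval⟩ := key f (h2 i) hfk
    have hmain := indicator_ratio_ge P f (fun ω => ∑ k, U k ω) hfm hS_meas hf0 hS0 hfS hint
    refine le_trans ?_ hmain
    rw [hval]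
    have hsum_split := hsplit1 (fun k => ∫ ω, f ω * U k ω ∂P)
    have hGi : ∫ ω, f ω * U i ω ∂P = ∫ ω, U i ω ^ 3 ∂P := by
      rw [show (fun ω => f ω * U i ω) = fun ω => U i ω ^ 3 from
        funext fun ω => by simp only [hf_def]; try ring]
    have hGrest : ∑ k ∈ Finset.univ.erase i, ∫ ω, f ω * U k ω ∂P
        = (∫ ω, f ω ∂P) * (1 - ∫ ω, U i ω ∂P) := by
      rw [Finset.sum_congr rfl (fun k hk => ?_), ← Finset.mul_sum, hrest1]
      have hki : k ≠ i := (Finset.mem_erase.1 hk).1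
      show ∫ ω, f ω * U k ω ∂P = (∫ ω, f ω ∂P) * (∫ ω, U k ω ∂P)
      rw [show (fun ω => f ω * U k ω) = fun ω => U i ω ^ 2 * U k ω from
        funext fun ω => by simp only [hf_def]; try ring]
      rw [show (∫ ω, f ω ∂P) = ∫ ω, U i ω ^ 2 ∂P from by rw [hf_def]]
      exact E21 i k hki.symm
    rw [hsum_split, hGi, hGrest]
    have heq2 : integral P f = ∫ ω, f ω ∂P := rfl
    exact le_of_eq (by first | (rw [heq2]; ring) | ring)
end

section
/- For the linear stochastic evolution: for every t ∈ ℕ, R_{t,1} ≤ R_t ≤ (|a|²/|a²|) R_{t,1}, where |a²| = Σ_{y∈Z^d} a_y². -/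
open MeasureTheory ProbabilityTheory Filter Topology
open scoped ENNReal NNReal Pointwise

namespace LSE

/-- The lattice `ℤ^d`. -/
abbrev Zd (d : ℕ) := Fin d → ℤ

/-- The ℓ¹-norm on `ℤ^d`. -/
def l1 {d : ℕ} (x : Zd d) : ℕ := ∑ i, (x i).natAbs

variable {d : ℕ} {Ω : Type*}

/-- The linear stochastic evolution `N_t`, started from a single particle at the origin:
`N_{t,y} = Σ_x N_{t-1,x} A_{t,x,y}`. -/
noncomputable def Np (A : ℕ → Zd d → Zd d → Ω → ℝ) : ℕ → Zd d → Ω → ℝ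
  | 0 => fun x _ => if x = 0 then 1 else 0
  | t + 1 => fun y ω => ∑' x, Np A t x ω * A (t + 1) x y ω

/-- `|N_t| = Σ_y N_{t,y}`. -/
noncomputable def Ntot (A : ℕ → Zd d → Zd d → Ω → ℝ) (t : ℕ) (ω : Ω) : ℝ :=
  ∑' y, Np A t y ω

/-- The population density `ρ_t(x)`. -/
noncomputable def dens (A : ℕ → Zd d → Zd d → Ω → ℝ) (t : ℕ) (x : Zd d) (ω : Ω) : ℝ :=
  if 0 < Ntot A t ω then Np A t x ω / Ntot A t ω else 0

/-- The replica overlap `R_t = Σ_x ρ_t(x)²`. -/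
noncomputable def overlap (A : ℕ → Zd d → Zd d → Ω → ℝ) (t : ℕ) (ω : Ω) : ℝ :=
  ∑' x, dens A t x ω ^ 2

/-- The event of survival: `|N_t| > 0` for all `t`. -/
def survival (A : ℕ → Zd d → Zd d → Ω → ℝ) : Set Ω := {ω | ∀ t, 0 < Ntot A t ω}

/-- `a_y = P[A_{1,0,y}]`. -/
noncomputable def aCoef [MeasurableSpace Ω] (P : Measure Ω) (A : ℕ → Zd d → Zd d → Ω → ℝ)
    (y : Zd d) : ℝ := ∫ ω, A 1 0 y ω ∂P

/-- `|a| = Σ_y a_y`. -/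
noncomputable def aTot [MeasurableSpace Ω] (P : Measure Ω) (A : ℕ → Zd d → Zd d → Ω → ℝ) : ℝ :=
  ∑' y, aCoef P A y

/-- The normalized total population `|N̄_t| = |a|^{-t} |N_t|`. -/
noncomputable def Nbar [MeasurableSpace Ω] (P : Measure Ω) (A : ℕ → Zd d → Zd d → Ω → ℝ)
    (t : ℕ) (ω : Ω) : ℝ := Ntot A t ω / aTot P A ^ t

/-- The σ-field `F_t` generated by `A_1, ..., A_t`. -/
def Filt [MeasurableSpace Ω] (A : ℕ → Zd d → Zd d → Ω → ℝ) (t : ℕ) : MeasurableSpace Ω :=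
  ⨆ s ∈ Finset.Icc 1 t,
    MeasurableSpace.comap (fun ω => fun x y => A s x y ω) MeasurableSpace.pi

/-- The standing assumptions on the i.i.d. random matrices `A_t`; the parameter `p` is the
moment assumption (`p = 3` in most statements, `p = 2` in the weakened one). -/
structure Setting [MeasurableSpace Ω] (P : Measure Ω) (A : ℕ → Zd d → Zd d → Ω → ℝ)
    (p : ℝ≥0∞) : Prop where
  /-- measurability of the entries -/
  meas : ∀ t x y, Measurable fun ω => A t x y ω
  /-- the entries are nonnegative -/
  nonneg : ∀ t x y ω, 0 ≤ A t x y ω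
  /-- the matrices `A_1, A_2, ...` are independent -/
  indep : iIndepFun (fun t ω => fun x y => A (t + 1) x y ω) P
  /-- the matrices `A_1, A_2, ...` are identically distributed -/
  ident : ∀ t : ℕ, IdentDistrib (fun ω => fun x y => A (t + 1) x y ω)
      (fun ω => fun x y => A 1 x y ω) P P
  /-- `A_1` is not a constant (deterministic) matrix -/
  notConst : ¬ ∃ C : Zd d → Zd d → ℝ, ∀ᵐ ω ∂P, ∀ x y, A 1 x y ω = C x y
  /-- the columns of `A_1` are independent -/
  colIndep : iIndepFun (fun (y : Zd d) ω => fun x => A 1 x y ω) P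
  /-- the `p`-th moments are finite -/
  mom : ∀ x y, MemLp (fun ω => A 1 x y ω) p P
  /-- finite range `r_A` -/
  finRange : ∃ r : ℕ, ∀ t x y, r < l1 (x - y) → ∀ᵐ ω ∂P, A t x y ω = 0
  /-- shift invariance in law -/
  shift : ∀ z : Zd d, IdentDistrib (fun ω => fun x y => A 1 (x + z) (y + z) ω)
      (fun ω => fun x y => A 1 x y ω) P P
  /-- the set `{x : Σ_y a_{x+y} a_y ≠ 0}` contains a linear basis of `ℝ^d` -/
  irred : ∃ v : Fin d → Zd d, (∀ i, ∑' y, aCoef P A (v i + y) * aCoef P A y ≠ 0) ∧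
      LinearIndependent ℝ fun i => fun j : Fin d => ((v i j : ℝ))

/-- Condition (covA) with constant `γ`. -/
def CovA [MeasurableSpace Ω] (P : Measure Ω) (A : ℕ → Zd d → Zd d → Ω → ℝ) (γ : ℝ) : Prop :=
  ∀ ξ : Zd d → ℝ, (∀ x, 0 ≤ ξ x) → Summable ξ →
    0 ≤ ∑' (x : Zd d) (x' : Zd d) (y : Zd d),
      ((∫ ω, A 1 x y ω * A 1 x' y ω ∂P) - γ * aCoef P A (y - x) * aCoef P A (y - x'))
        * ξ x * ξ x'

/-- Convolution of two functions on `ℤ^d`. -/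
noncomputable def conv {d : ℕ} (f g : Zd d → ℝ) (x : Zd d) : ℝ := ∑' y, f (x - y) * g y

/-- The smoothed density `ρ_{t,1} = ρ_t * ā` where `ā(x) = a_x / |a|`. -/
noncomputable def dens1 [MeasurableSpace Ω] (P : Measure Ω) (A : ℕ → Zd d → Zd d → Ω → ℝ)
    (t : ℕ) (x : Zd d) (ω : Ω) : ℝ :=
  ∑' y, dens A t (x - y) ω * (aCoef P A y / aTot P A)

/-- The smoothed replica overlap `R_{t,1} = |ρ_{t,1}²|`. -/
noncomputable def overlap1 [MeasurableSpace Ω] (P : Measure Ω) (A : ℕ → Zd d → Zd d → Ω → ℝ)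
    (t : ℕ) (ω : Ω) : ℝ := ∑' x, dens1 P A t x ω ^ 2

/-- `b(x) = |a|⁻² Σ_y a_y a_{y-x}`. -/
noncomputable def bFn [MeasurableSpace Ω] (P : Measure Ω) (A : ℕ → Zd d → Zd d → Ω → ℝ)
    (x : Zd d) : ℝ := (∑' y, aCoef P A y * aCoef P A (y - x)) / aTot P A ^ 2

/-- `t`-fold convolution power: `bIter b t = b_t` for `t ≥ 1`. -/
noncomputable def bIter {d : ℕ} (b : Zd d → ℝ) : ℕ → Zd d → ℝ
  | 0 => fun x => if x = 0 then 1 else 0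
  | t + 1 => conv b (bIter b t)

/-- `g = Σ_{s=1}^{t₀} b_s`. -/
noncomputable def gFn [MeasurableSpace Ω] (P : Measure Ω) (A : ℕ → Zd d → Zd d → Ω → ℝ)
    (t₀ : ℕ) (x : Zd d) : ℝ := ∑ s ∈ Finset.Icc 1 t₀, bIter (bFn P A) s x

/-- `X_t = ⟨g * ρ_t, ρ_t⟩`. -/
noncomputable def Xproc [MeasurableSpace Ω] (P : Measure Ω) (A : ℕ → Zd d → Zd d → Ω → ℝ)
    (t₀ : ℕ) (t : ℕ) (ω : Ω) : ℝ :=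
  ∑' (x : Zd d) (y : Zd d), gFn P A t₀ (x - y) * dens A t x ω * dens A t y ω

/-- The compensator in Doob's decomposition `X_t = M_t + A_t`:
`A_0 = 0`, `ΔA_t = P[ΔX_t | F_{t-1}]`. -/
noncomputable def doobA [MeasurableSpace Ω] (P : Measure Ω) (A : ℕ → Zd d → Zd d → Ω → ℝ)
    (t₀ : ℕ) : ℕ → Ω → ℝ
  | 0 => fun _ => 0
  | t + 1 => fun ω => doobA P A t₀ t ω +
      (P[fun ω => Xproc P A t₀ (t + 1) ω - Xproc P A t₀ t ω | Filt A t]) ω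


section Aux

/-- The finite "ball" of radius `M` in `ℤ^d` (coordinates bounded by `M`). -/
noncomputable def ball (d M : ℕ) : Finset (Zd d) :=
  Fintype.piFinset fun _ => Finset.Icc (-(M : ℤ)) M

lemma mem_ball_of_l1_le {d M : ℕ} {x : Zd d} (h : l1 x ≤ M) : x ∈ ball d M := by
  simp only [ball, Fintype.mem_piFinset, Finset.mem_Icc]
  intro i
  have hle : (x i).natAbs ≤ l1 x :=
    Finset.single_le_sum (f := fun i => (x i).natAbs) (fun _ _ => Nat.zero_le _)
      (Finset.mem_univ i)
  omega

lemma l1_lt_of_not_mem_ball {d M : ℕ} {x : Zd d} (h : x ∉ ball d M) : M < l1 x := by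
  by_contra h'
  exact h (mem_ball_of_l1_le (by omega))

lemma l1_triangle {d : ℕ} (u v : Zd d) : l1 (u + v) ≤ l1 u + l1 v := by
  simp only [l1, ← Finset.sum_add_distrib]
  refine Finset.sum_le_sum fun i _ => ?_
  simpa using Int.natAbs_add_le (u i) (v i)

lemma l1_sub_comm {d : ℕ} (x y : Zd d) : l1 (x - y) = l1 (y - x) := by
  unfold l1
  refine Finset.sum_congr rfl fun i _ => ?_
  have : (x - y) i = -((y - x) i) := by simp only [Pi.sub_apply, Pi.neg_apply]; ring
  rw [this, Int.natAbs_neg]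

lemma l1_tri' {d : ℕ} (x y : Zd d) : l1 y ≤ l1 (x - y) + l1 x := by
  have h := l1_triangle (y - x) x
  rw [sub_add_cancel] at h
  rw [l1_sub_comm]
  exact h

/-- Key deterministic inequality: for nonnegative finitely supported `ρ` and a nonnegative
finitely supported probability weight `w`, the smoothed ℓ²-norm is between
`(∑ w²) ∑ ρ²` and `∑ ρ²`. -/
lemma key_ineq {G : Type*} [AddCommGroup G] [DecidableEq G]
    (ρ w : G → ℝ) (hρ0 : ∀ x, 0 ≤ ρ x) (hw0 : ∀ y, 0 ≤ w y)
    (S W : Finset G) (hρS : ∀ x ∉ S, ρ x = 0) (hwW : ∀ y ∉ W, w y = 0)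
    (hw1 : ∑ y ∈ W, w y = 1) :
    (∑' x, (∑' y, ρ (x - y) * w y) ^ 2) ≤ (∑' x, ρ x ^ 2) ∧
    (∑ y ∈ W, w y ^ 2) * (∑' x, ρ x ^ 2) ≤ ∑' x, (∑' y, ρ (x - y) * w y) ^ 2 := by
  classical
  set σ : G → ℝ := fun x => ∑ y ∈ W, ρ (x - y) * w y with hσdef
  have hσ : ∀ x, (∑' y, ρ (x - y) * w y) = σ x := fun x =>
    tsum_eq_sum fun y hy => by rw [hwW y hy, mul_zero]
  have hσS : ∀ x ∉ S + W, σ x = 0 := by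
    intro x hx
    refine Finset.sum_eq_zero fun y hy => ?_
    have hxy : x - y ∉ S := by
      intro h
      exact hx (Finset.mem_add.2 ⟨x - y, h, y, hy, sub_add_cancel x y⟩)
    rw [hρS _ hxy, zero_mul]
  have hRsum : Summable fun x => ρ x ^ 2 :=
    summable_of_ne_finset_zero (s := S) fun x hx => by rw [hρS x hx]; ring
  have hR : (∑' x, ρ x ^ 2) = ∑ x ∈ S, ρ x ^ 2 :=
    tsum_eq_sum fun x hx => by rw [hρS x hx]; ring
  have hSsig : (∑' x, (∑' y, ρ (x - y) * w y) ^ 2) = ∑ x ∈ S + W, σ x ^ 2 := by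
    rw [tsum_congr fun x => by rw [hσ x]]
    exact tsum_eq_sum fun x hx => by rw [hσS x hx]; ring
  -- sums of shifted squares
  have hslice_le : ∀ (y : G) (B : Finset G),
      (∑ x ∈ B, ρ (x - y) ^ 2) ≤ ∑' x, ρ x ^ 2 := by
    intro y B
    have himg : ∑ z ∈ B.image (fun x => x - y), ρ z ^ 2 = ∑ x ∈ B, ρ (x - y) ^ 2 :=
      Finset.sum_image (fun a _ b _ h => by simpa using congrArg (· + y) h)
    rw [← himg]
    exact Summable.sum_le_tsum _ (fun z _ => sq_nonneg _) hRsum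
  have hslice_eq : ∀ y ∈ W, (∑ x ∈ S + W, ρ (x - y) ^ 2) = ∑' x, ρ x ^ 2 := by
    intro y hy
    have himg : ∑ z ∈ (S + W).image (fun x => x - y), ρ z ^ 2 = ∑ x ∈ S + W, ρ (x - y) ^ 2 :=
      Finset.sum_image (fun a _ b _ h => by simpa using congrArg (· + y) h)
    rw [← himg, hR]
    refine (Finset.sum_subset ?_ ?_).symm
    · intro z hz
      exact Finset.mem_image.2 ⟨z + y, Finset.add_mem_add hz hy, by simp⟩
    · intro z _ hz
      rw [hρS z hz]; ring
  constructor
  · -- upper bound: Cauchy-Schwarz per site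
    rw [hSsig]
    calc ∑ x ∈ S + W, σ x ^ 2
        ≤ ∑ x ∈ S + W, ∑ y ∈ W, ρ (x - y) ^ 2 * w y := by
          refine Finset.sum_le_sum fun x _ => ?_
          have hcs := Finset.sum_mul_sq_le_sq_mul_sq W (fun y => Real.sqrt (w y))
            (fun y => ρ (x - y) * Real.sqrt (w y))
          have h1 : ∀ y, Real.sqrt (w y) * (ρ (x - y) * Real.sqrt (w y)) = ρ (x - y) * w y := by
            intro y
            rw [show Real.sqrt (w y) * (ρ (x - y) * Real.sqrt (w y))
                = ρ (x - y) * (Real.sqrt (w y) * Real.sqrt (w y)) by ring,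
              Real.mul_self_sqrt (hw0 y)]
          have h2 : ∀ y, Real.sqrt (w y) ^ 2 = w y := fun y => Real.sq_sqrt (hw0 y)
          have h3 : ∀ y, (ρ (x - y) * Real.sqrt (w y)) ^ 2 = ρ (x - y) ^ 2 * w y := by
            intro y
            rw [mul_pow, h2 y]
          calc σ x ^ 2 = (∑ y ∈ W, Real.sqrt (w y) * (ρ (x - y) * Real.sqrt (w y))) ^ 2 := by
                rw [hσdef]
                congr 1
                exact Finset.sum_congr rfl fun y _ => (h1 y).symm
            _ ≤ (∑ y ∈ W, Real.sqrt (w y) ^ 2) * ∑ y ∈ W, (ρ (x - y) * Real.sqrt (w y)) ^ 2 :=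
                hcs
            _ = (∑ y ∈ W, w y) * ∑ y ∈ W, ρ (x - y) ^ 2 * w y := by
                congr 1
                · exact Finset.sum_congr rfl fun y _ => h2 y
                · exact Finset.sum_congr rfl fun y _ => h3 y
            _ = ∑ y ∈ W, ρ (x - y) ^ 2 * w y := by rw [hw1, one_mul]
      _ = ∑ y ∈ W, (∑ x ∈ S + W, ρ (x - y) ^ 2) * w y := by
          rw [Finset.sum_comm]
          exact Finset.sum_congr rfl fun y _ => (Finset.sum_mul ..).symm
      _ ≤ ∑ y ∈ W, (∑' x, ρ x ^ 2) * w y := by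
          refine Finset.sum_le_sum fun y hy => ?_
          exact mul_le_mul_of_nonneg_right (hslice_le y _) (hw0 y)
      _ = ∑' x, ρ x ^ 2 := by rw [← Finset.mul_sum, hw1, mul_one]
  · -- lower bound: drop cross terms
    rw [hSsig]
    calc (∑ y ∈ W, w y ^ 2) * (∑' x, ρ x ^ 2)
        = ∑ y ∈ W, (∑ x ∈ S + W, ρ (x - y) ^ 2) * w y ^ 2 := by
          rw [Finset.sum_mul]
          refine Finset.sum_congr rfl fun y hy => ?_
          rw [hslice_eq y hy, mul_comm]
      _ = ∑ x ∈ S + W, ∑ y ∈ W, ρ (x - y) ^ 2 * w y ^ 2 := by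
          rw [Finset.sum_comm]
          exact Finset.sum_congr rfl fun y _ => Finset.sum_mul ..
      _ ≤ ∑ x ∈ S + W, σ x ^ 2 := by
          refine Finset.sum_le_sum fun x _ => ?_
          have h := Finset.sum_sq_le_sq_sum_of_nonneg
            (f := fun y => ρ (x - y) * w y) (s := W)
            (fun y _ => mul_nonneg (hρ0 _) (hw0 _))
          calc ∑ y ∈ W, ρ (x - y) ^ 2 * w y ^ 2
              = ∑ y ∈ W, (ρ (x - y) * w y) ^ 2 := by
                exact Finset.sum_congr rfl fun y _ => (mul_pow ..).symm
            _ ≤ (∑ y ∈ W, ρ (x - y) * w y) ^ 2 := h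
            _ = σ x ^ 2 := rfl

variable {d : ℕ} {Ω : Type*}

lemma Np_nonneg (A : ℕ → Zd d → Zd d → Ω → ℝ) (hA : ∀ t x y ω, 0 ≤ A t x y ω) :
    ∀ t x ω, 0 ≤ Np A t x ω := by
  intro t
  induction t with
  | zero => intro x ω; simp only [Np]; positivity
  | succ t ih =>
    intro x ω
    exact tsum_nonneg fun z => mul_nonneg (ih z ω) (hA (t + 1) z x ω)

lemma integral_A_eq [MeasurableSpace Ω] {P : Measure Ω} {A : ℕ → Zd d → Zd d → Ω → ℝ}
    {p : ℝ≥0∞} (hset : Setting P A p) (x y : Zd d) :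
    ∫ ω, A 1 x y ω ∂P = aCoef P A (y - x) := by
  have hg : Measurable fun f : Zd d → Zd d → ℝ => f 0 (y - x) :=
    (measurable_pi_apply (y - x)).comp (measurable_pi_apply 0)
  have h := ((hset.shift x).comp hg).integral_eq
  simpa [Function.comp, zero_add, sub_add_cancel, aCoef] using h

end Aux

/-- **Lemma 3.2**: for the linear stochastic evolution, for every `t`,
`R_{t,1} ≤ R_t ≤ (|a|²/|a²|) R_{t,1}` almost surely, where `|a²| = Σ_y a_y²`. -/
theorem overlap1_le_overlap_le
    (d : ℕ) (hd : 1 ≤ d) {Ω : Type*} [MeasurableSpace Ω] (P : Measure Ω)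
    [IsProbabilityMeasure P] (A : ℕ → Zd d → Zd d → Ω → ℝ)
    (hset : Setting P A 3) :
    ∀ t : ℕ, ∀ᵐ ω ∂P,
      overlap1 P A t ω ≤ overlap A t ω ∧
      overlap A t ω ≤ (aTot P A ^ 2 / ∑' y, aCoef P A y ^ 2) * overlap1 P A t ω := by
  classical
  obtain ⟨r, hr⟩ := hset.finRange
  have hA0 := hset.nonneg
  -- basic facts about a
  have ha0 : ∀ y, 0 ≤ aCoef P A y := fun y =>
    integral_nonneg fun ω => hA0 1 0 y ω
  have haW : ∀ y : Zd d, r < l1 y → aCoef P A y = 0 := by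
    intro y hy
    have h0y : r < l1 ((0 : Zd d) - y) := by
      rwa [l1_sub_comm, sub_zero]
    have := hr 1 0 y h0y
    refine integral_eq_zero_of_ae ?_
    filter_upwards [this] with ω h using h
  have haball : ∀ y : Zd d, y ∉ ball d r → aCoef P A y = 0 := fun y hy =>
    haW y (l1_lt_of_not_mem_ball hy)
  have haTot_eq : aTot P A = ∑ y ∈ ball d r, aCoef P A y :=
    tsum_eq_sum fun y hy => haball y hy
  have haSq_eq : (∑' y, aCoef P A y ^ 2) = ∑ y ∈ ball d r, aCoef P A y ^ 2 :=
    tsum_eq_sum fun y hy => by rw [haball y hy]; ring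
  -- existence of a nonzero coefficient
  have hex : ∃ y, aCoef P A y ≠ 0 := by
    by_contra h
    push_neg at h
    have hzero : ∀ x y : Zd d, ∀ᵐ ω ∂P, A 1 x y ω = 0 := by
      intro x y
      have hint : ∫ ω, A 1 x y ω ∂P = 0 := by
        rw [integral_A_eq hset x y]; exact h _
      have := (integral_eq_zero_iff_of_nonneg (fun ω => hA0 1 x y ω)
        ((hset.mom x y).integrable (by norm_num))).1 hint
      filter_upwards [this] with ω hω using hω
    refine hset.notConst ⟨fun _ _ => 0, ?_⟩
    rw [ae_all_iff]
    intro x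
    rw [ae_all_iff]
    intro y
    exact hzero x y
  obtain ⟨y₀, hy₀⟩ := hex
  have hy₀pos : 0 < aCoef P A y₀ := lt_of_le_of_ne (ha0 y₀) (Ne.symm hy₀)
  have hy₀ball : y₀ ∈ ball d r := by
    by_contra h
    exact hy₀ (haball y₀ h)
  have haT : 0 < aTot P A := by
    rw [haTot_eq]
    exact Finset.sum_pos' (fun y _ => ha0 y) ⟨y₀, hy₀ball, hy₀pos⟩
  have haa : 0 < ∑' y, aCoef P A y ^ 2 := by
    rw [haSq_eq]
    exact Finset.sum_pos' (fun y _ => sq_nonneg _) ⟨y₀, hy₀ball, by positivity⟩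
  -- the weight function
  set w : Zd d → ℝ := fun y => aCoef P A y / aTot P A with hwdef
  have hw0 : ∀ y, 0 ≤ w y := fun y => div_nonneg (ha0 y) haT.le
  have hwW : ∀ y ∉ ball d r, w y = 0 := fun y hy => by
    simp [hwdef, haball y hy]
  have hw1 : ∑ y ∈ ball d r, w y = 1 := by
    rw [hwdef, ← Finset.sum_div, ← haTot_eq, div_self haT.ne']
  have hwsq : ∑ y ∈ ball d r, w y ^ 2 = (∑' y, aCoef P A y ^ 2) / aTot P A ^ 2 := by
    rw [haSq_eq, Finset.sum_div]
    exact Finset.sum_congr rfl fun y _ => by rw [hwdef, div_pow]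
  -- the a.s. finite-range event
  have hE : ∀ᵐ ω ∂P, ∀ t : ℕ, ∀ x y : Zd d, r < l1 (x - y) → A t x y ω = 0 := by
    rw [ae_all_iff]
    intro t
    rw [ae_all_iff]
    intro x
    rw [ae_all_iff]
    intro y
    by_cases h : r < l1 (x - y)
    · filter_upwards [hr t x y h] with ω h0 _ using h0
    · filter_upwards with ω h' using absurd h' h
  intro t
  filter_upwards [hE] with ω hω
  -- support of N
  have hNsupp : ∀ s : ℕ, ∀ x : Zd d, s * r < l1 x → Np A s x ω = 0 := by
    intro s
    induction s with
    | zero =>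
      intro x hx
      have hx0 : x ≠ 0 := by
        rintro rfl
        simp [l1] at hx
      simp [Np, hx0]
    | succ s ih =>
      intro y hy
      have hy' : s * r + r < l1 y := by
        rw [Nat.succ_mul] at hy; exact hy
      show (∑' x, Np A s x ω * A (s + 1) x y ω) = 0
      have hterm : ∀ x, Np A s x ω * A (s + 1) x y ω = 0 := by
        intro x
        by_cases hx : l1 x ≤ s * r
        · have htri := l1_tri' x y
          have hxy : r < l1 (x - y) := by omega
          rw [hω (s + 1) x y hxy, mul_zero]
        · rw [ih x (lt_of_not_ge hx), zero_mul]
      rw [tsum_congr hterm, tsum_zero]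
  -- the density
  set ρ : Zd d → ℝ := fun x => dens A t x ω with hρdef
  have hρ0 : ∀ x, 0 ≤ ρ x := by
    intro x
    show 0 ≤ dens A t x ω
    unfold dens
    split_ifs with h
    · exact div_nonneg (Np_nonneg A hA0 t x ω) h.le
    · exact le_refl 0
  have hρS : ∀ x ∉ ball d (t * r), ρ x = 0 := by
    intro x hx
    have hN : Np A t x ω = 0 := hNsupp t x (l1_lt_of_not_mem_ball hx)
    show dens A t x ω = 0
    unfold dens
    split_ifs with h
    · rw [hN, zero_div]
    · rfl
  have hkey := key_ineq ρ w hρ0 hw0 (ball d (t * r)) (ball d r) hρS hwW hw1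
  have ho1 : overlap1 P A t ω = ∑' x, (∑' y, ρ (x - y) * w y) ^ 2 := rfl
  have ho : overlap A t ω = ∑' x, ρ x ^ 2 := rfl
  constructor
  · rw [ho1, ho]
    exact hkey.1
  · rw [ho1, ho]
    have h2 := hkey.2
    rw [hwsq] at h2
    set Sa := ∑' y, aCoef P A y ^ 2
    set R := ∑' x, ρ x ^ 2
    set O1 := ∑' x, (∑' y, ρ (x - y) * w y) ^ 2
    have hfactor : (aTot P A ^ 2 / Sa) * (Sa / aTot P A ^ 2) = 1 := by
      field_simp
    calc R = (aTot P A ^ 2 / Sa) * (Sa / aTot P A ^ 2 * R) := by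
          rw [← mul_assoc, hfactor, one_mul]
      _ ≤ (aTot P A ^ 2 / Sa) * O1 := by
          refine mul_le_mul_of_nonneg_left h2 ?_
          positivity

end LSE
end
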